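/- arXiv:2106.09350 — 4 statements merged into one kernel-verified Lean document; each statement's English description precedes it below -/
import Mathlib

section
/- If A and B are n×n positive semidefinite real matrices, then det(A+B)^(1/n) ≥ det(A)^(1/n) + det(B)^(1/n) (Minkowski's determinant inequality). -/
open Matrix Finset

/-- Superadditivity of the geometric mean: `1 + (∏ x)^{1/n} ≤ (∏ (1+x))^{1/n}`. -/
lemma key_prod (n : ℕ) (hn : 0 < n) (x : Fin n → ℝ) (hx : ∀ i, 0 ≤ x i) :
    1 + (∏ i, x i) ^ ((1 : ℝ) / n) ≤ (∏ i, (1 + x i)) ^ ((1 : ℝ) / n) := by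
  set e : ℝ := (1 : ℝ) / n with he
  have hepos : 0 < e := by positivity
  have h1x : ∀ i, (0:ℝ) < 1 + x i := fun i => by linarith [hx i]
  set Q : ℝ := ∏ i, (1 + x i) with hQ
  set P : ℝ := ∏ i, x i with hP
  have hQpos : 0 < Q := Finset.prod_pos fun i _ => h1x i
  have hPnn : 0 ≤ P := Finset.prod_nonneg fun i _ => hx i
  have hsum : ∑ _i : Fin n, e = 1 := by
    simp only [Finset.sum_const, Finset.card_univ, Fintype.card_fin, nsmul_eq_mul, he]
    field_simp
  have G1 := Real.geom_mean_le_arith_mean_weighted Finset.univ (fun _ => e)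
      (fun i => 1 / (1 + x i)) (fun i _ => hepos.le) hsum
      (fun i _ => le_of_lt (div_pos one_pos (h1x i)))
  have G2 := Real.geom_mean_le_arith_mean_weighted Finset.univ (fun _ => e)
      (fun i => x i / (1 + x i)) (fun i _ => hepos.le) hsum
      (fun i _ => div_nonneg (hx i) (h1x i).le)
  rw [Real.finset_prod_rpow _ _ (fun i _ => le_of_lt (div_pos one_pos (h1x i))) e] at G1
  rw [Real.finset_prod_rpow _ _ (fun i _ => div_nonneg (hx i) (h1x i).le) e] at G2
  have hp1 : (∏ i, 1 / (1 + x i)) = 1 / Q := by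
    rw [Finset.prod_div_distrib, Finset.prod_const_one]
  have hp2 : (∏ i, x i / (1 + x i)) = P / Q := Finset.prod_div_distrib _ _
  rw [hp1, Real.div_rpow zero_le_one hQpos.le] at G1
  rw [hp2, Real.div_rpow hPnn hQpos.le] at G2
  have hsum12 : (∑ i, e * (1 / (1 + x i))) + (∑ i, e * (x i / (1 + x i))) = 1 := by
    have step : ∀ i ∈ Finset.univ, e * (1 / (1 + x i)) + e * (x i / (1 + x i)) = e :=
      fun i _ => by
        have h := (h1x i).ne'
        field_simp
    rw [← Finset.sum_add_distrib, Finset.sum_congr rfl step, hsum]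
  have hQe : 0 < Q ^ e := Real.rpow_pos_of_pos hQpos e
  have : (1 : ℝ) ^ e / Q ^ e + P ^ e / Q ^ e ≤ 1 := by linarith [G1, G2, hsum12.le]
  rw [Real.one_rpow, ← add_div, div_le_one hQe] at this
  linarith

/-- det of a PSD real matrix is nonnegative. -/
lemma psd_det_nonneg {n : ℕ} {M : Matrix (Fin n) (Fin n) ℝ} (hM : M.PosSemidef) :
    0 ≤ M.det := by
  rw [hM.1.det_eq_prod_eigenvalues]
  exact Finset.prod_nonneg fun i _ => hM.eigenvalues_nonneg i

/-- det (1 + M) = ∏ (1 + eigenvalues) for a Hermitian real matrix. -/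
lemma det_one_add_eq_prod {n : ℕ} {M : Matrix (Fin n) (Fin n) ℝ} (hM : M.IsHermitian) :
    (1 + M).det = ∏ i, (1 + hM.eigenvalues i) := by
  set U : Matrix (Fin n) (Fin n) ℝ := (hM.eigenvectorUnitary : Matrix (Fin n) (Fin n) ℝ) with hU
  have hUU : U * star U = 1 := mem_unitaryGroup_iff.mp hM.eigenvectorUnitary.2
  have hdecomp : (1 : Matrix (Fin n) (Fin n) ℝ) + M
      = U * (1 + diagonal (RCLike.ofReal ∘ hM.eigenvalues)) * star U := by
    rw [mul_add, add_mul, mul_one, hUU]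
    congr 1
    exact hM.spectral_theorem
  rw [hdecomp, det_mul_right_comm, hUU, one_mul]
  have : (1 : Matrix (Fin n) (Fin n) ℝ) + diagonal (RCLike.ofReal ∘ hM.eigenvalues)
      = diagonal (fun i => 1 + hM.eigenvalues i) := by
    rw [← diagonal_one, diagonal_add]
    rfl
  rw [this, det_diagonal]

open scoped MatrixOrder in
/-- Minkowski when `det A ≠ 0`. -/
lemma minkowski_aux (n : ℕ) (hn : 0 < n)
    (A B : Matrix (Fin n) (Fin n) ℝ)
    (hA : A.PosSemidef) (hB : B.PosSemidef) (hA0 : A.det ≠ 0) :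
    A.det ^ ((1 : ℝ) / n) + B.det ^ ((1 : ℝ) / n) ≤ (A + B).det ^ ((1 : ℝ) / n) := by
  set S : Matrix (Fin n) (Fin n) ℝ := CFC.sqrt A with hSdef
  have hSS : S * S = A := CFC.sqrt_mul_sqrt_self A hA.nonneg
  have hSherm : Sᴴ = S := (CFC.sqrt_nonneg A).posSemidef.1
  have hdetS : S.det * S.det = A.det := by rw [← det_mul, hSS]
  have hdetS0 : S.det ≠ 0 := fun h => hA0 (by rw [← hdetS, h, mul_zero])
  have hdetApos : 0 < A.det := lt_of_le_of_ne (psd_det_nonneg hA) (Ne.symm hA0)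
  have hSinv : S * S⁻¹ = 1 := mul_nonsing_inv S (by simpa using hdetS0)
  have hSinv' : S⁻¹ * S = 1 := nonsing_inv_mul S (by simpa using hdetS0)
  have hSinvherm : (S⁻¹)ᴴ = S⁻¹ := by rw [conjTranspose_nonsing_inv, hSherm]
  set M : Matrix (Fin n) (Fin n) ℝ := S⁻¹ * B * S⁻¹ with hMdef
  have hM : M.PosSemidef := by
    have := hB.mul_mul_conjTranspose_same S⁻¹
    rwa [hSinvherm] at this
  have hBeq : S * M * S = B := by
    rw [hMdef]
    calc S * (S⁻¹ * B * S⁻¹) * S = (S * S⁻¹) * B * (S⁻¹ * S) := by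
          simp only [Matrix.mul_assoc]
      _ = B := by rw [hSinv, hSinv', one_mul, mul_one]
  have hABeq : S * (1 + M) * S = A + B := by
    rw [mul_add, add_mul, mul_one, hSS, hBeq]
  have hdetB : B.det = A.det * M.det := by
    rw [← hBeq, det_mul_right_comm, hSS, det_mul, mul_comm]
  have hdetAB : (A + B).det = A.det * (1 + M).det := by
    rw [← hABeq, det_mul_right_comm, hSS, det_mul, mul_comm]
  have hdetM : M.det = ∏ i, hM.1.eigenvalues i := by
    rw [hM.1.det_eq_prod_eigenvalues]
    norm_num
  have hdet1M : (1 + M).det = ∏ i, (1 + hM.1.eigenvalues i) :=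
    det_one_add_eq_prod hM.1
  have key := key_prod n hn hM.1.eigenvalues (fun i => hM.eigenvalues_nonneg i)
  rw [← hdetM, ← hdet1M] at key
  rw [hdetB, hdetAB, Real.mul_rpow hdetApos.le (psd_det_nonneg hM),
    Real.mul_rpow hdetApos.le (by
      rw [hdet1M]
      exact Finset.prod_nonneg fun i _ => by linarith [hM.eigenvalues_nonneg i])]
  have hAe : 0 < A.det ^ ((1:ℝ)/n) := Real.rpow_pos_of_pos hdetApos _
  nlinarith [mul_le_mul_of_nonneg_left key hAe.le]

theorem minkowski_det_inequality (n : ℕ) (hn : 0 < n)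
    (A B : Matrix (Fin n) (Fin n) ℝ)
    (hA : A.PosSemidef) (hB : B.PosSemidef) :
    A.det ^ ((1 : ℝ) / n) + B.det ^ ((1 : ℝ) / n) ≤ (A + B).det ^ ((1 : ℝ) / n) := by
  by_cases hA0 : A.det = 0
  · by_cases hB0 : B.det = 0
    · have hne : (1 : ℝ) / n ≠ 0 := by positivity
      rw [hA0, hB0, Real.zero_rpow hne, add_zero]
      exact Real.rpow_nonneg (psd_det_nonneg (hA.add hB)) _
    · have := minkowski_aux n hn B A hB hA hB0
      rw [add_comm (B.det ^ ((1:ℝ)/n)), add_comm B A] at this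
      exact this
  · exact minkowski_aux n hn A B hA hB hA0
end

section
/- If A and B are n×n positive semidefinite real matrices, then det(A+B) ≥ det(A) + det(B). -/
open Matrix

lemma core_det_le (n : ℕ) (hn : 0 < n) (A : Matrix (Fin n) (Fin n) ℝ)
    (hA : A.PosSemidef) (hB : (1 - A).PosSemidef) :
    A.det + (1 - A).det ≤ 1 := by
  have h := hA.1
  set U : Matrix (Fin n) (Fin n) ℝ := (h.eigenvectorUnitary : Matrix (Fin n) (Fin n) ℝ) with hU
  have hUU : U * star U = 1 := (Matrix.mem_unitaryGroup_iff).mp h.eigenvectorUnitary.2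
  have hUU' : star U * U = 1 := (Matrix.mem_unitaryGroup_iff').mp h.eigenvectorUnitary.2
  set lam := h.eigenvalues with hlam
  have hspec : A = U * diagonal (RCLike.ofReal ∘ lam) * star U := h.spectral_theorem
  have hdiag : diagonal (RCLike.ofReal ∘ lam) = diagonal lam := by congr 1
  rw [hdiag] at hspec
  have hdetA : A.det = ∏ i, lam i := by simpa using h.det_eq_prod_eigenvalues
  have hspec2 : (1 - A) = U * diagonal (fun i => 1 - lam i) * star U := by
    have hd : diagonal (fun i => 1 - lam i) = 1 - diagonal lam := by
      rw [← diagonal_one, diagonal_sub]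
    rw [hd, mul_sub, sub_mul, mul_one, hUU, ← hspec]
  -- det (1 - A) = ∏ (1 - lam i)
  have hdetU : U.det * (star U).det = 1 := by
    rw [← det_mul, hUU, det_one]
  have hdetB : (1 - A).det = ∏ i, (1 - lam i) := by
    rw [hspec2, det_mul, det_mul, mul_right_comm, hdetU, one_mul, det_diagonal]
  -- eigenvalue bounds
  have hge : ∀ i, 0 ≤ lam i := hA.eigenvalues_nonneg
  have hle : ∀ i, lam i ≤ 1 := by
    intro i
    have hpsd : ((star U) * (1 - A) * (star U)ᴴ).PosSemidef := hB.mul_mul_conjTranspose_same _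
    have heq : (star U) * (1 - A) * (star U)ᴴ = diagonal (fun i => 1 - lam i) := by
      have hsU : (star U)ᴴ = U := star_star U
      rw [hspec2, hsU]
      simp only [← mul_assoc]
      rw [hUU', one_mul, mul_assoc, hUU', mul_one]
    rw [heq, posSemidef_diagonal_iff] at hpsd
    linarith [hpsd i]
  -- product bounds
  obtain ⟨i0, _⟩ : ∃ i : Fin n, True := ⟨⟨0, hn⟩, trivial⟩
  have key : ∀ (f : Fin n → ℝ), (∀ i, 0 ≤ f i) → (∀ i, f i ≤ 1) → ∏ i, f i ≤ f i0 := by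
    intro f h0 h1
    rw [← Finset.prod_erase_mul _ _ (Finset.mem_univ i0)]
    calc (∏ i ∈ Finset.univ.erase i0, f i) * f i0
        ≤ 1 * f i0 := mul_le_mul_of_nonneg_right
          (Finset.prod_le_one (fun i _ => h0 i) (fun i _ => h1 i)) (h0 i0)
      _ = f i0 := one_mul _
  have k1 : ∏ i, lam i ≤ lam i0 := key _ hge hle
  have k2 : ∏ i, (1 - lam i) ≤ 1 - lam i0 := key _ (fun i => by linarith [hle i]) (fun i => by linarith [hge i])
  rw [hdetA, hdetB]
  linarith

open scoped MatrixOrder in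
theorem det_superadditive_psd (n : ℕ) (hn : 0 < n)
    (A B : Matrix (Fin n) (Fin n) ℝ)
    (hA : A.PosSemidef) (hB : B.PosSemidef) :
    A.det + B.det ≤ (A + B).det := by
  have hS : (A + B).PosSemidef := hA.add hB
  by_cases hdet : (A + B).det = 0
  · -- singular case
    obtain ⟨v, hv, hSv⟩ := (Matrix.exists_mulVec_eq_zero_iff.mpr hdet)
    have hsum : v ⬝ᵥ A *ᵥ v + v ⬝ᵥ B *ᵥ v = 0 := by
      have : v ⬝ᵥ (A + B) *ᵥ v = 0 := by rw [hSv, dotProduct_zero]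
      rw [← this, add_mulVec, dotProduct_add]
    have hAv : v ⬝ᵥ A *ᵥ v = 0 := by
      have h1 : 0 ≤ v ⬝ᵥ A *ᵥ v := by simpa using hA.dotProduct_mulVec_nonneg v
      have h2 : 0 ≤ v ⬝ᵥ B *ᵥ v := by simpa using hB.dotProduct_mulVec_nonneg v
      linarith
    have hBv : v ⬝ᵥ B *ᵥ v = 0 := by
      have h1 : 0 ≤ v ⬝ᵥ A *ᵥ v := by simpa using hA.dotProduct_mulVec_nonneg v
      have h2 : 0 ≤ v ⬝ᵥ B *ᵥ v := by simpa using hB.dotProduct_mulVec_nonneg v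
      linarith
    have hdA : A.det = 0 := Matrix.exists_mulVec_eq_zero_iff.mp
      ⟨v, hv, (hA.dotProduct_mulVec_zero_iff v).mp (by simpa using hAv)⟩
    have hdB : B.det = 0 := Matrix.exists_mulVec_eq_zero_iff.mp
      ⟨v, hv, (hB.dotProduct_mulVec_zero_iff v).mp (by simpa using hBv)⟩
    rw [hdA, hdB, hdet]; norm_num
  · -- invertible case
    set T := CFC.sqrt (A + B) with hT
    have hTT : T * T = A + B := CFC.sqrt_mul_sqrt_self _ hS.nonneg
    have hTpsd : T.PosSemidef := (CFC.sqrt_nonneg _).posSemidef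
    have hdetT : T.det * T.det = (A + B).det := by rw [← det_mul, hTT]
    have hdetTne : T.det ≠ 0 := fun h => hdet (by rw [← hdetT, h, mul_zero])
    have hTunit : IsUnit T.det := hdetTne.isUnit
    have hTiH : T⁻¹.IsHermitian := by
      rw [Matrix.IsHermitian, Matrix.conjTranspose_nonsing_inv, hTpsd.1.eq]
    have hTinv : T * T⁻¹ = 1 := mul_nonsing_inv T hTunit
    have hTinv' : T⁻¹ * T = 1 := nonsing_inv_mul T hTunit
    set A' := T⁻¹ * A * T⁻¹ with hA'def
    set B' := T⁻¹ * B * T⁻¹ with hB'def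
    have hA' : A'.PosSemidef := by
      have := hA.mul_mul_conjTranspose_same T⁻¹
      rwa [hTiH.eq] at this
    have hB' : B'.PosSemidef := by
      have := hB.mul_mul_conjTranspose_same T⁻¹
      rwa [hTiH.eq] at this
    have hsum : A' + B' = 1 := by
      rw [hA'def, hB'def, ← add_mul, ← mul_add, ← hTT, ← mul_assoc, mul_assoc T⁻¹ T T, ← mul_assoc T⁻¹ T, hTinv', one_mul, hTinv]
    have hB'eq : B' = 1 - A' := by rw [← hsum]; abel
    have hS1A : (1 - A').PosSemidef := hB'eq ▸ hB'
    have hcore : A'.det + (1 - A').det ≤ 1 := core_det_le n hn A' hA' hS1A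
    have hdetA' : A'.det = T⁻¹.det * A.det * T⁻¹.det := by rw [hA'def, det_mul, det_mul]
    have hdetB' : (1 - A').det = T⁻¹.det * B.det * T⁻¹.det := by
      rw [← hB'eq, hB'def, det_mul, det_mul]
    have hdetTinv : T⁻¹.det = T.det⁻¹ := by
      rw [det_nonsing_inv, Ring.inverse_eq_inv]
    have hpos : 0 < (A + B).det := by
      have h0 : 0 ≤ (A + B).det := by rw [← hdetT]; exact mul_self_nonneg _
      exact lt_of_le_of_ne h0 (Ne.symm hdet)
    calc A.det + B.det = (A + B).det * (A'.det + (1 - A').det) := by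
          rw [hdetA', hdetB', hdetTinv, ← hdetT]; field_simp
      _ ≤ (A + B).det * 1 := mul_le_mul_of_nonneg_left hcore hpos.le
      _ = (A + B).det := mul_one _
end

section
/- For a positive definite n×n matrix M, the set function F(S) = log det(M[S,S]) (with F(∅)=0) is submodular: for all S, T ⊆ {1,…,n}, F(S∪T) + F(S∩T) ≤ F(S) + F(T). -/
open Matrix Finset

namespace LogDetSub

variable {n : ℕ}

/-- The principal submatrix indexed by a finset. -/
def subM (M : Matrix (Fin n) (Fin n) ℝ) (S : Finset (Fin n)) : Matrix S S ℝ :=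
  M.submatrix (fun i : S => (i : Fin n)) (fun j : S => (j : Fin n))

/-- Extend a vector on `S` by zero. -/
def incl (S : Finset (Fin n)) (x : S → ℝ) : Fin n → ℝ :=
  fun k => if h : k ∈ S then x ⟨k, h⟩ else 0

lemma incl_coe (S : Finset (Fin n)) (x : S → ℝ) (i : S) : incl S x (i : Fin n) = x i := by
  simp [incl, i.2]

lemma incl_of_not_mem (S : Finset (Fin n)) (x : S → ℝ) {k : Fin n} (hk : k ∉ S) :
    incl S x k = 0 := by simp [incl, hk]

lemma incl_sub (S : Finset (Fin n)) (x y : S → ℝ) :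
    incl S (x - y) = incl S x - incl S y := by
  ext k
  by_cases h : k ∈ S <;> simp [incl, h]

lemma dot_incl (S : Finset (Fin n)) (x : S → ℝ) (v : Fin n → ℝ) :
    incl S x ⬝ᵥ v = ∑ i : S, x i * v (i : Fin n) := by
  rw [dotProduct]
  calc ∑ k : Fin n, incl S x k * v k
      = ∑ k ∈ S, incl S x k * v k := by
        symm
        apply Finset.sum_subset (Finset.subset_univ S)
        intro k _ hk
        simp [incl_of_not_mem S x hk]
    _ = ∑ i : S, incl S x (i : Fin n) * v (i : Fin n) :=
        (Finset.sum_coe_sort S (fun k => incl S x k * v k)).symm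
    _ = ∑ i : S, x i * v (i : Fin n) := by simp [incl_coe]

lemma mulVec_incl (M : Matrix (Fin n) (Fin n) ℝ) (S : Finset (Fin n)) (x : S → ℝ)
    (k : Fin n) : (M *ᵥ incl S x) k = ∑ i : S, M k (i : Fin n) * x i := by
  have : (M *ᵥ incl S x) k = incl S x ⬝ᵥ (fun j => M k j) := by
    simp [mulVec, dotProduct, mul_comm]
  rw [this, dot_incl]
  simp [mul_comm]


lemma posDef_subM {M : Matrix (Fin n) (Fin n) ℝ} (hM : M.PosDef) (S : Finset (Fin n)) :
    (subM M S).PosDef := by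
  refine posDef_iff_dotProduct_mulVec.mpr ⟨?_, ?_⟩
  · exact hM.1.submatrix _
  · intro x hx
    obtain ⟨i, hi⟩ := Function.ne_iff.mp hx
    have hincl : incl S x ≠ 0 := by
      intro h
      apply hi
      have := congrFun h (i : Fin n)
      rwa [incl_coe, Pi.zero_apply] at this
    have hpos := hM.dotProduct_mulVec_pos hincl
    rw [star_trivial] at hpos ⊢
    calc (0 : ℝ) < incl S x ⬝ᵥ (M *ᵥ incl S x) := hpos
      _ = x ⬝ᵥ (subM M S *ᵥ x) := by
          rw [dot_incl, dotProduct]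
          refine Finset.sum_congr rfl fun i _ => ?_
          rw [mulVec_incl]
          rfl

lemma det_subM_pos {M : Matrix (Fin n) (Fin n) ℝ} (hM : M.PosDef) (S : Finset (Fin n)) :
    0 < (subM M S).det :=
  (posDef_subM hM S).det_pos

/-- Reindexing equiv for `insert a S`. -/
def insEquiv (S : Finset (Fin n)) (a : Fin n) (ha : a ∉ S) :
    (S ⊕ Unit) ≃ ↥(insert a S) where
  toFun := Sum.elim (fun i => ⟨i.1, Finset.mem_insert_of_mem i.2⟩)
    (fun _ => ⟨a, Finset.mem_insert_self a S⟩)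
  invFun k := if h : (k : Fin n) ∈ S then Sum.inl ⟨k, h⟩ else Sum.inr ()
  left_inv := by
    rintro (i | ⟨⟩)
    · simp
    · simp [ha]
  right_inv := by
    rintro ⟨k, hk⟩
    by_cases h : k ∈ S
    · simp [h]
    · have : k = a := by
        rcases Finset.mem_insert.mp hk with h' | h'
        · exact h'
        · exact absurd h' h
      subst this
      simp [h]

/-- The Schur complement scalar. -/
noncomputable def schur (M : Matrix (Fin n) (Fin n) ℝ) (S : Finset (Fin n)) (a : Fin n) : ℝ :=
  M a a - (fun i : S => M a (i : Fin n)) ⬝ᵥ ((subM M S)⁻¹ *ᵥ (fun j : S => M (j : Fin n) a))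

lemma det_insert {M : Matrix (Fin n) (Fin n) ℝ} (hM : M.PosDef) {S : Finset (Fin n)}
    {a : Fin n} (ha : a ∉ S) :
    (subM M (insert a S)).det = (subM M S).det * schur M S a := by
  classical
  have hunit : IsUnit (subM M S).det := (det_subM_pos hM S).ne'.isUnit
  haveI : Invertible (subM M S) := (subM M S).invertibleOfIsUnitDet hunit
  set e := insEquiv S a ha
  have hblock : (subM M (insert a S)).submatrix e e =
      Matrix.fromBlocks (subM M S) (Matrix.of fun (i : S) (_ : Unit) => M (i : Fin n) a)
        (Matrix.of fun (_ : Unit) (j : S) => M a (j : Fin n))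
        (Matrix.of fun (_ : Unit) (_ : Unit) => M a a) := by
    ext i j
    cases i <;> cases j <;> rfl
  have hdet : (subM M (insert a S)).det = ((subM M (insert a S)).submatrix e e).det :=
    (Matrix.det_submatrix_equiv_self e _).symm
  rw [hdet, hblock, Matrix.det_fromBlocks₁₁, Matrix.invOf_eq_nonsing_inv]
  congr 1
  rw [Matrix.det_unique]
  show _ - ((Matrix.of fun (_ : Unit) (j : S) => M a (j : Fin n)) * (subM M S)⁻¹ *
      (Matrix.of fun (i : S) (_ : Unit) => M (i : Fin n) a)) default default = _
  unfold schur
  congr 1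
  simp only [Matrix.mul_apply, Matrix.of_apply, dotProduct, mulVec, Finset.sum_mul,
    Finset.mul_sum, dotProduct]
  rw [Finset.sum_comm]
  exact Finset.sum_congr rfl fun i _ => Finset.sum_congr rfl fun j _ => by ring


noncomputable def xvec (M : Matrix (Fin n) (Fin n) ℝ) (S : Finset (Fin n)) (a : Fin n) :
    Fin n → ℝ :=
  incl S ((subM M S)⁻¹ *ᵥ (fun j : S => M (j : Fin n) a))

noncomputable def rvec (M : Matrix (Fin n) (Fin n) ℝ) (S : Finset (Fin n)) (a : Fin n) :
    Fin n → ℝ :=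
  Pi.single a 1 - xvec M S a

lemma mulVec_rvec {M : Matrix (Fin n) (Fin n) ℝ} (hM : M.PosDef) (S : Finset (Fin n))
    (a : Fin n) (i : S) : (M *ᵥ rvec M S a) (i : Fin n) = 0 := by
  have hunit : IsUnit (subM M S).det := (det_subM_pos hM S).ne'.isUnit
  have h1 : (M *ᵥ xvec M S a) (i : Fin n) =
      (subM M S *ᵥ ((subM M S)⁻¹ *ᵥ (fun j : S => M (j : Fin n) a))) i := by
    rw [xvec, mulVec_incl]
    rfl
  rw [rvec, Matrix.mulVec_sub, Pi.sub_apply, h1, Matrix.mulVec_mulVec,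
    Matrix.mul_nonsing_inv _ hunit]
  simp

lemma dot_rvec {M : Matrix (Fin n) (Fin n) ℝ} (hM : M.PosDef) (S : Finset (Fin n))
    (a : Fin n) : rvec M S a ⬝ᵥ (M *ᵥ rvec M S a) = schur M S a := by
  have hx : xvec M S a ⬝ᵥ (M *ᵥ rvec M S a) = 0 := by
    rw [xvec, dot_incl]
    refine Finset.sum_eq_zero fun i _ => ?_
    rw [mulVec_rvec hM S a i, mul_zero]
  have h0 : rvec M S a ⬝ᵥ (M *ᵥ rvec M S a) = (M *ᵥ rvec M S a) a := by
    nth_rewrite 1 [rvec]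
    rw [sub_dotProduct, single_dotProduct, one_mul, hx, sub_zero]
  rw [h0, rvec, Matrix.mulVec_sub, Pi.sub_apply]
  simp only [Matrix.mulVec_single_one, mul_one]
  rw [xvec, mulVec_incl, schur]
  rfl

lemma dot_symm {M : Matrix (Fin n) (Fin n) ℝ} (hM : M.PosDef) (u v : Fin n → ℝ) :
    u ⬝ᵥ (M *ᵥ v) = v ⬝ᵥ (M *ᵥ u) := by
  have hsym : ∀ i j, M i j = M j i := by
    intro i j
    have := congrFun (congrFun hM.1 i) j
    simpa [Matrix.conjTranspose_apply] using this.symm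
  simp only [dotProduct, mulVec, dotProduct, Finset.mul_sum]
  rw [Finset.sum_comm]
  exact Finset.sum_congr rfl fun i _ => Finset.sum_congr rfl fun j _ => by
    rw [hsym i j]; ring

lemma schur_le {M : Matrix (Fin n) (Fin n) ℝ} (hM : M.PosDef) (S : Finset (Fin n))
    (a : Fin n) (v : S → ℝ) :
    schur M S a ≤ (Pi.single a 1 - incl S v) ⬝ᵥ (M *ᵥ (Pi.single a 1 - incl S v)) := by
  set w : Fin n → ℝ := incl S ((subM M S)⁻¹ *ᵥ (fun j : S => M (j : Fin n) a) - v) with hw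
  have hsplit : Pi.single a 1 - incl S v = rvec M S a + w := by
    rw [hw, incl_sub, rvec, xvec]
    abel
  have hwr : w ⬝ᵥ (M *ᵥ rvec M S a) = 0 := by
    rw [hw, dot_incl]
    exact Finset.sum_eq_zero fun i _ => by rw [mulVec_rvec hM S a i, mul_zero]
  have hrw : rvec M S a ⬝ᵥ (M *ᵥ w) = 0 := by rw [dot_symm hM, hwr]
  have hww : 0 ≤ w ⬝ᵥ (M *ᵥ w) := by
    have := hM.posSemidef.dotProduct_mulVec_nonneg w
    rwa [star_trivial] at this
  rw [hsplit, add_dotProduct, Matrix.mulVec_add, dotProduct_add, dotProduct_add,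
    hwr, hrw, dot_rvec hM S a]
  linarith

lemma schur_mono {M : Matrix (Fin n) (Fin n) ℝ} (hM : M.PosDef) {S T : Finset (Fin n)}
    (hST : S ⊆ T) (a : Fin n) : schur M T a ≤ schur M S a := by
  set y : S → ℝ := (subM M S)⁻¹ *ᵥ (fun j : S => M (j : Fin n) a) with hy
  set v' : T → ℝ := fun j => if h : (j : Fin n) ∈ S then y ⟨j, h⟩ else 0 with hv'
  have hincl : incl T v' = incl S y := by
    ext k
    by_cases h : k ∈ S
    · simp [incl, hv', h, hST h]
    · by_cases h2 : k ∈ T <;> simp [incl, hv', h, h2]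
  calc schur M T a ≤ (Pi.single a 1 - incl T v') ⬝ᵥ (M *ᵥ (Pi.single a 1 - incl T v')) :=
        schur_le hM T a v'
    _ = rvec M S a ⬝ᵥ (M *ᵥ rvec M S a) := by rw [hincl]; rfl
    _ = schur M S a := dot_rvec hM S a

lemma schur_pos {M : Matrix (Fin n) (Fin n) ℝ} (hM : M.PosDef) (S : Finset (Fin n))
    {a : Fin n} (ha : a ∉ S) : 0 < schur M S a := by
  rw [← dot_rvec hM S a]
  have hr : rvec M S a ≠ 0 := by
    intro h
    have := congrFun h a
    rw [rvec, Pi.sub_apply, Pi.single_eq_same, xvec, incl_of_not_mem S _ ha,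
      Pi.zero_apply] at this
    norm_num at this
  have := hM.dotProduct_mulVec_pos hr
  rwa [star_trivial] at this


lemma log_insert {M : Matrix (Fin n) (Fin n) ℝ} (hM : M.PosDef) {S : Finset (Fin n)}
    {a : Fin n} (ha : a ∉ S) :
    Real.log (subM M (insert a S)).det
      = Real.log (subM M S).det + Real.log (schur M S a) := by
  rw [det_insert hM ha, Real.log_mul (det_subM_pos hM S).ne' (schur_pos hM S ha).ne']

lemma key {M : Matrix (Fin n) (Fin n) ℝ} (hM : M.PosDef) {S T : Finset (Fin n)}
    (hST : S ⊆ T) {a : Fin n} (haT : a ∉ T) :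
    Real.log (subM M (insert a T)).det + Real.log (subM M S).det ≤
      Real.log (subM M (insert a S)).det + Real.log (subM M T).det := by
  have haS : a ∉ S := fun h => haT (hST h)
  rw [log_insert hM haT, log_insert hM haS]
  have hlog : Real.log (schur M T a) ≤ Real.log (schur M S a) := by
    have := schur_mono hM hST a
    have hpos := schur_pos hM T haT
    exact Real.log_le_log hpos this
  linarith

lemma telescope {M : Matrix (Fin n) (Fin n) ℝ} (hM : M.PosDef) (D : Finset (Fin n)) :
    ∀ T V : Finset (Fin n), V ⊆ T → Disjoint D T →
      Real.log (subM M (D ∪ T)).det + Real.log (subM M V).det ≤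
        Real.log (subM M (D ∪ V)).det + Real.log (subM M T).det := by
  classical
  induction D using Finset.induction_on with
  | empty =>
    intro T V _ _
    rw [Finset.empty_union, Finset.empty_union]
    linarith
  | @insert a D haD ih =>
    intro T V hVT hdisj
    have haT : a ∉ T := (Finset.disjoint_insert_left.mp hdisj).1
    have hdisj' : Disjoint D T := (Finset.disjoint_insert_left.mp hdisj).2
    have haDT : a ∉ D ∪ T := by simp [haD, haT]
    rw [Finset.insert_union, Finset.insert_union]
    have hK := key hM (Finset.union_subset_union (Finset.Subset.refl D) hVT) haDT
    have hIH := ih T V hVT hdisj'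
    linarith

end LogDetSub

theorem logdet_submodular (n : ℕ)
    (M : Matrix (Fin n) (Fin n) ℝ) (hM : M.PosDef)
    (F : Finset (Fin n) → ℝ)
    (hF : ∀ S : Finset (Fin n),
      F S = Real.log (M.submatrix (fun i : S => (i : Fin n)) (fun j : S => (j : Fin n))).det)
    (S T : Finset (Fin n)) :
    F (S ∪ T) + F (S ∩ T) ≤ F S + F T := by
  have hF' : ∀ U : Finset (Fin n), F U = Real.log (LogDetSub.subM M U).det := hF
  have h := LogDetSub.telescope hM (S \ T) T (S ∩ T) Finset.inter_subset_right
    Finset.sdiff_disjoint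
  rw [Finset.sdiff_union_self_eq_union, Finset.sdiff_union_inter] at h
  rw [hF' (S ∪ T), hF' (S ∩ T), hF' S, hF' T]
  linarith
end

section
/- The permanent of a positive semidefinite matrix is super-additive: for PSD n×n matrices A, B, perm(A+B) ≥ perm(A) + perm(B), and perm(A) > 0 for positive definite A. -/
open Finset Equiv Matrix

variable {n : ℕ} {κ : Type*} [Fintype κ] [DecidableEq κ]

/-- Q w f = Σ_σ Π_i w i (f (σ i)) -/
noncomputable def Qf (w : Fin n → κ → ℝ) (f : Fin n → κ) : ℝ :=
  ∑ σ : Equiv.Perm (Fin n), ∏ i, w i (f (σ i))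

omit [DecidableEq κ] in
lemma gram_perm_key (w : Fin n → κ → ℝ) :
    (n.factorial : ℝ) * (Matrix.of fun i j => ∑ k, w i k * w j k).permanent
      = ∑ f : Fin n → κ, (Qf w f) ^ 2 := by
  have hperm : (Matrix.of fun i j => ∑ k, w i k * w j k).permanent
      = ∑ σ : Equiv.Perm (Fin n), ∑ f : Fin n → κ,
          (∏ i, w i (f i)) * ∏ i, w i (f (σ i)) := by
    unfold Matrix.permanent
    refine Finset.sum_congr rfl fun σ _ => ?_
    have h1 : ∏ i, (Matrix.of fun i j => ∑ k, w i k * w j k) (σ i) i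
        = ∑ f : Fin n → κ, ∏ i, (w (σ i) (f i) * w i (f i)) := by
      simp only [Matrix.of_apply]
      rw [Finset.prod_univ_sum, Fintype.piFinset_univ]
    rw [h1]
    -- reindex f ↦ f ∘ σ
    rw [← Equiv.sum_comp (Equiv.arrowCongr σ (Equiv.refl κ)).symm]
    refine Finset.sum_congr rfl fun f _ => ?_
    have h2 : ∀ g : Fin n → κ, ∏ i, (w (σ i) (g i) * w i (g i))
        = (∏ i, w (σ i) (g i)) * ∏ i, w i (g i) := fun g => Finset.prod_mul_distrib
    rw [h2]
    have h3 : (Equiv.arrowCongr σ (Equiv.refl κ)).symm f = f ∘ σ := by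
      ext i; simp [Equiv.arrowCongr]
    rw [h3]
    have h4 : ∏ i, w (σ i) ((f ∘ σ) i) = ∏ i, w i (f i) :=
      Equiv.prod_comp σ (fun j => w j (f j))
    have h5 : ∏ i, w i ((f ∘ σ) i) = ∏ i, w i (f (σ i)) := rfl
    rw [h4, h5]
  rw [hperm]
  have e1 : ∀ f : Fin n → κ, (Qf w f) ^ 2
      = ∑ σ : Equiv.Perm (Fin n), ∑ τ : Equiv.Perm (Fin n),
          (∏ i, w i (f (σ i))) * ∏ i, w i (f (τ i)) := by
    intro f
    rw [Qf, sq, Finset.sum_mul_sum]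
  have e2 : ∀ σ τ : Equiv.Perm (Fin n),
      (∑ f : Fin n → κ, (∏ i, w i (f (σ i))) * ∏ i, w i (f (τ i)))
      = ∑ f : Fin n → κ, (∏ i, w i (f i)) * ∏ i, w i (f ((σ⁻¹ * τ) i)) := by
    intro σ τ
    rw [← Equiv.sum_comp (Equiv.arrowCongr σ (Equiv.refl κ))
      (fun f => (∏ i, w i (f (σ i))) * ∏ i, w i (f (τ i)))]
    refine Finset.sum_congr rfl fun f _ => ?_
    have ha : (Equiv.arrowCongr σ (Equiv.refl κ)) f = f ∘ σ.symm := by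
      ext i; simp [Equiv.arrowCongr]
    rw [ha]
    simp [Equiv.Perm.mul_apply, Function.comp, Equiv.Perm.inv_def]
  symm
  calc ∑ f : Fin n → κ, Qf w f ^ 2
      = ∑ f : Fin n → κ, ∑ σ : Equiv.Perm (Fin n), ∑ τ : Equiv.Perm (Fin n),
          (∏ i, w i (f (σ i))) * ∏ i, w i (f (τ i)) :=
        Finset.sum_congr rfl fun f _ => e1 f
    _ = ∑ σ : Equiv.Perm (Fin n), ∑ f : Fin n → κ, ∑ τ : Equiv.Perm (Fin n),
          (∏ i, w i (f (σ i))) * ∏ i, w i (f (τ i)) := Finset.sum_comm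
    _ = ∑ σ : Equiv.Perm (Fin n), ∑ τ : Equiv.Perm (Fin n), ∑ f : Fin n → κ,
          (∏ i, w i (f (σ i))) * ∏ i, w i (f (τ i)) :=
        Finset.sum_congr rfl fun σ _ => Finset.sum_comm
    _ = ∑ σ : Equiv.Perm (Fin n), ∑ τ : Equiv.Perm (Fin n), ∑ f : Fin n → κ,
          (∏ i, w i (f i)) * ∏ i, w i (f ((σ⁻¹ * τ) i)) :=
        Finset.sum_congr rfl fun σ _ => Finset.sum_congr rfl fun τ _ => e2 σ τ
    _ = ∑ σ : Equiv.Perm (Fin n), ∑ τ : Equiv.Perm (Fin n), ∑ f : Fin n → κ,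
          (∏ i, w i (f i)) * ∏ i, w i (f (τ i)) := by
        refine Finset.sum_congr rfl fun σ _ => ?_
        exact Equiv.sum_comp (Equiv.mulLeft σ⁻¹)
          (fun ρ => ∑ f : Fin n → κ, (∏ i, w i (f i)) * ∏ i, w i (f (ρ i)))
    _ = (n.factorial : ℝ) * ∑ τ : Equiv.Perm (Fin n), ∑ f : Fin n → κ,
          (∏ i, w i (f i)) * ∏ i, w i (f (τ i)) := by
        rw [Finset.sum_const, Finset.card_univ, Fintype.card_perm, Fintype.card_fin,
          nsmul_eq_mul]


omit [DecidableEq κ] in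
lemma perm_gram_nonneg (w : Fin n → κ → ℝ) :
    0 ≤ (Matrix.of fun i j => ∑ k, w i k * w j k).permanent := by
  classical
  have h := gram_perm_key w
  have hpos : (0:ℝ) < n.factorial := by exact_mod_cast n.factorial_pos
  nlinarith [Finset.sum_nonneg (fun f (_ : f ∈ (Finset.univ : Finset (Fin n → κ))) =>
    sq_nonneg (Qf w f))]

lemma posSemidef_gram_eq {A : Matrix (Fin n) (Fin n) ℝ} (hA : A.PosSemidef) :
    ∃ u : Fin n → Fin n → ℝ, A = Matrix.of fun i j => ∑ k, u i k * u j k := by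
  obtain ⟨U, hU⟩ : ∃ U : Matrix (Fin n) (Fin n) ℝ, A = star U * U := by
    open scoped MatrixOrder in
    exact CStarAlgebra.nonneg_iff_eq_star_mul_self.mp hA.nonneg
  refine ⟨fun i k => U k i, ?_⟩
  ext i j
  rw [hU]
  simp [Matrix.mul_apply, Matrix.conjTranspose_apply]

lemma perm_nonneg_of_posSemidef {A : Matrix (Fin n) (Fin n) ℝ} (hA : A.PosSemidef) :
    0 ≤ A.permanent := by
  obtain ⟨u, hu⟩ := posSemidef_gram_eq hA
  rw [hu]
  exact perm_gram_nonneg u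

lemma perm_superadd_aux {n : ℕ} (hn : 0 < n) {A B : Matrix (Fin n) (Fin n) ℝ}
    (hA : A.PosSemidef) (hB : B.PosSemidef) :
    A.permanent + B.permanent ≤ (A + B).permanent := by
  classical
  obtain ⟨u, hu⟩ := posSemidef_gram_eq hA
  obtain ⟨v, hv⟩ := posSemidef_gram_eq hB
  set w : Fin n → (Fin n ⊕ Fin n) → ℝ := fun i => Sum.elim (u i) (v i) with hw
  have hAB : A + B = Matrix.of fun i j => ∑ k, w i k * w j k := by
    ext i j
    rw [hu, hv]
    simp [hw, Fintype.sum_sum_type]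
  -- key identities
  have kAB := gram_perm_key w
  have kA := gram_perm_key u
  have kB := gram_perm_key v
  rw [← hAB] at kAB
  rw [← hu] at kA
  rw [← hv] at kB
  -- images of pure-left and pure-right functions
  have hinjl : Function.Injective
      (fun g : Fin n → Fin n => (Sum.inl ∘ g : Fin n → Fin n ⊕ Fin n)) :=
    fun g h e => funext fun i => Sum.inl_injective (congrFun e i)
  have hinjr : Function.Injective
      (fun g : Fin n → Fin n => (Sum.inr ∘ g : Fin n → Fin n ⊕ Fin n)) :=
    fun g h e => funext fun i => Sum.inr_injective (congrFun e i)
  set S₁ : Finset (Fin n → Fin n ⊕ Fin n) :=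
    Finset.univ.image (fun g : Fin n → Fin n => (Sum.inl ∘ g : Fin n → Fin n ⊕ Fin n)) with hS1
  set S₂ : Finset (Fin n → Fin n ⊕ Fin n) :=
    Finset.univ.image (fun g : Fin n → Fin n => (Sum.inr ∘ g : Fin n → Fin n ⊕ Fin n)) with hS2
  have hdisj : Disjoint S₁ S₂ := by
    rw [Finset.disjoint_left]
    rintro f hf1 hf2
    simp only [hS1, hS2, Finset.mem_image] at hf1 hf2
    obtain ⟨g, _, rfl⟩ := hf1
    obtain ⟨h, _, he⟩ := hf2
    have := congrFun he ⟨0, hn⟩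
    simp at this
  have hQl : ∀ g : Fin n → Fin n, Qf w (Sum.inl ∘ g) = Qf u g := by
    intro g; unfold Qf
    exact Finset.sum_congr rfl fun σ _ => Finset.prod_congr rfl fun i _ => rfl
  have hQr : ∀ g : Fin n → Fin n, Qf w (Sum.inr ∘ g) = Qf v g := by
    intro g; unfold Qf
    exact Finset.sum_congr rfl fun σ _ => Finset.prod_congr rfl fun i _ => rfl
  have hsum : ∑ f ∈ S₁ ∪ S₂, (Qf w f) ^ 2
      ≤ ∑ f : Fin n → Fin n ⊕ Fin n, (Qf w f) ^ 2 :=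
    Finset.sum_le_sum_of_subset_of_nonneg (Finset.subset_univ _)
      (fun f _ _ => sq_nonneg _)
  rw [Finset.sum_union hdisj, hS1, hS2,
    Finset.sum_image (fun g _ h _ e => hinjl e),
    Finset.sum_image (fun g _ h _ e => hinjr e)] at hsum
  simp only [hQl, hQr] at hsum
  rw [← kA, ← kB, ← kAB] at hsum
  have hpos : (0:ℝ) < n.factorial := by exact_mod_cast n.factorial_pos
  nlinarith

lemma posDef_sub_diag {n : ℕ} (hn : 0 < n) {A : Matrix (Fin n) (Fin n) ℝ}
    (hA : A.PosDef) :
    ∃ ε : ℝ, 0 < ε ∧ (A - Matrix.diagonal (fun _ : Fin n => ε)).PosSemidef := by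
  classical
  have hne : (Finset.univ : Finset (Fin n)).Nonempty := ⟨⟨0, hn⟩, Finset.mem_univ _⟩
  set μ := hA.1.eigenvalues with hμ
  set ε := Finset.univ.inf' hne μ with hε
  refine ⟨ε, ?_, ?_⟩
  · rw [hε, Finset.lt_inf'_iff]
    exact fun i _ => hA.eigenvalues_pos i
  · set U : Matrix (Fin n) (Fin n) ℝ := (hA.1.eigenvectorUnitary : Matrix (Fin n) (Fin n) ℝ)
      with hUdef
    have hu : U * star U = 1 := (Matrix.mem_unitaryGroup_iff).mp hA.1.eigenvectorUnitary.2
    have spec : A = U * Matrix.diagonal (RCLike.ofReal ∘ μ) * star U := hA.1.spectral_theorem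
    have hde : Matrix.diagonal (fun _ : Fin n => ε) = ε • (1 : Matrix (Fin n) (Fin n) ℝ) :=
      (Matrix.smul_one_eq_diagonal ε).symm
    have h2 : Matrix.diagonal (fun _ : Fin n => ε)
        = U * Matrix.diagonal (fun _ : Fin n => ε) * star U := by
      rw [hde, Matrix.mul_smul, Matrix.smul_mul, mul_one, hu]
    have h1 : A - Matrix.diagonal (fun _ : Fin n => ε)
        = U * Matrix.diagonal (fun i => μ i - ε) * star U := by
      conv_lhs => rw [spec, h2]
      rw [← Matrix.sub_mul, ← Matrix.mul_sub, ← Matrix.diagonal_sub]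
      congr 2
    rw [h1]
    refine (Matrix.posSemidef_diagonal_iff.mpr fun i =>
      sub_nonneg.mpr (Finset.inf'_le _ (Finset.mem_univ i))).mul_mul_conjTranspose_same U

lemma perm_pos_of_posDef {n : ℕ} (hn : 0 < n) {A : Matrix (Fin n) (Fin n) ℝ}
    (hA : A.PosDef) : 0 < A.permanent := by
  obtain ⟨ε, hε, hsub⟩ := posDef_sub_diag hn hA
  have hd : (Matrix.diagonal (fun _ : Fin n => ε)).PosSemidef :=
    Matrix.posSemidef_diagonal_iff.mpr fun _ => hε.le
  have h := perm_superadd_aux hn hd hsub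
  rw [add_sub_cancel] at h
  have h2 : (0:ℝ) < (Matrix.diagonal (fun _ : Fin n => ε)).permanent := by
    rw [Matrix.permanent_diagonal]
    positivity
  have h3 := perm_nonneg_of_posSemidef hsub
  linarith

/-- The permanent is super-additive on PSD matrices and positive on positive definite ones. -/
theorem permanent_superadditive (n : ℕ) (hn : 0 < n)
    (A B : Matrix (Fin n) (Fin n) ℝ)
    (hA : A.PosSemidef) (hB : B.PosSemidef) :
    (A.permanent + B.permanent ≤ (A + B).permanent) ∧
    (A.PosDef → 0 < A.permanent) := by
  exact ⟨perm_superadd_aux hn hA hB, fun h => perm_pos_of_posDef hn h⟩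
end
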